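/- Let α, β : I → ℝ be C¹ functions and λ : I → ℝ a continuous function with α̇ = 2λβ and β̇ = 2λα on I, where 0 ∈ I. Then −α² + β² is constant on I. If moreover α(0)² > β(0)² and α(0) < 0, then, setting r = √(α(0)² − β(0)²) and Λ(s) = ∫₀ˢ λ(t) dt, there exists θ₀ ∈ ℝ such that α(s) = −r cosh(−2Λ(s) + θ₀) and β(s) = r sinh(−2Λ(s) + θ₀) for all s ∈ I. -/

import Mathlib

open Real Set

/-- A function with zero derivative (within) on a convex set is constant there. -/
lemma aux_const_of_derivWithin_zero {J : Set ℝ} (hJ : Convex ℝ J) {f : ℝ → ℝ}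
    (hf : ∀ x ∈ J, HasDerivWithinAt f 0 J x) {x y : ℝ} (hx : x ∈ J) (hy : y ∈ J) :
    f x = f y := by
  have h := hJ.norm_image_sub_le_of_norm_hasFDerivWithin_le
    (C := 0)
    (f' := fun _ => ContinuousLinearMap.smulRight (1 : ℝ →L[ℝ] ℝ) (0 : ℝ))
    (fun z hz => (hf z hz).hasFDerivWithinAt)
    (fun z _ => by simp) hy hx
  simp only [zero_mul, norm_le_zero_iff, sub_eq_zero] at h
  exact h

/-- for the system α̇ = 2λβ, β̇ = 2λα on an interval I ∋ 0, the quantity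
−α² + β² is constant; if α(0)² > β(0)² and α(0) < 0 then, with
r = √(α(0)² − β(0)²) and Λ(s) = ∫₀ˢ λ, one has α = −r cosh(−2Λ + θ₀) and
β = r sinh(−2Λ + θ₀) for some θ₀. -/
theorem ode_hyperbolic_solution (I : Set ℝ) (hI : I.OrdConnected) (h0 : (0:ℝ) ∈ I)
    (α β lam : ℝ → ℝ)
    (hα : ∀ s ∈ I, HasDerivAt α (2 * lam s * β s) s)
    (hβ : ∀ s ∈ I, HasDerivAt β (2 * lam s * α s) s)
    (hlam : ContinuousOn lam I) :
    (∀ s ∈ I, -(α s)^2 + (β s)^2 = -(α 0)^2 + (β 0)^2) ∧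
    ((β 0)^2 < (α 0)^2 → α 0 < 0 →
      ∃ θ₀ : ℝ, ∀ s ∈ I,
        α s = -Real.sqrt ((α 0)^2 - (β 0)^2)
            * Real.cosh (-2 * (∫ t in (0:ℝ)..s, lam t) + θ₀) ∧
        β s = Real.sqrt ((α 0)^2 - (β 0)^2)
            * Real.sinh (-2 * (∫ t in (0:ℝ)..s, lam t) + θ₀)) := by
  set Λ : ℝ → ℝ := fun s => ∫ t in (0:ℝ)..s, lam t with hΛdef
  -- the two conserved quantities
  have key : ∀ s ∈ I,
      α s * Real.cosh (2 * Λ s) - β s * Real.sinh (2 * Λ s) = α 0 ∧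
      β s * Real.cosh (2 * Λ s) - α s * Real.sinh (2 * Λ s) = β 0 := by
    intro s hs
    set J : Set ℝ := Set.uIcc 0 s with hJdef
    have hJI : J ⊆ I := hI.uIcc_subset h0 hs
    have hJconv : Convex ℝ J := convex_uIcc 0 s
    have hJmeas : MeasurableSet J := measurableSet_uIcc
    have hlamJ : ContinuousOn lam J := hlam.mono hJI
    -- derivative of Λ within J
    have hΛ : ∀ x ∈ J, HasDerivWithinAt Λ (lam x) J x := by
      intro x hx
      haveI : Fact (x ∈ Set.uIcc 0 s) := ⟨hx⟩
      have hint : IntervalIntegrable lam MeasureTheory.volume 0 x :=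
        (hlamJ.mono (Set.uIcc_subset_uIcc Set.left_mem_uIcc hx)).intervalIntegrable
      exact intervalIntegral.integral_hasDerivWithinAt_right hint
        (hlamJ.stronglyMeasurableAtFilter_nhdsWithin hJmeas x)
        (hlamJ x hx)
    have hderiv : ∀ (f g : ℝ → ℝ), (∀ x ∈ I, HasDerivAt f (2 * lam x * g x) x) →
        (∀ x ∈ I, HasDerivAt g (2 * lam x * f x) x) →
        ∀ x ∈ J, HasDerivWithinAt
          (fun x => f x * Real.cosh (2 * Λ x) - g x * Real.sinh (2 * Λ x)) 0 J x := by
      intro f g hf hg x hx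
      have h2Λ : HasDerivWithinAt (fun x => 2 * Λ x) (2 * lam x) J x :=
        (hΛ x hx).const_mul 2
      have hc : HasDerivWithinAt (fun x => Real.cosh (2 * Λ x))
          (Real.sinh (2 * Λ x) * (2 * lam x)) J x := h2Λ.cosh
      have hsh : HasDerivWithinAt (fun x => Real.sinh (2 * Λ x))
          (Real.cosh (2 * Λ x) * (2 * lam x)) J x := h2Λ.sinh
      have hfx := (hf x (hJI hx)).hasDerivWithinAt (s := J)
      have hgx := (hg x (hJI hx)).hasDerivWithinAt (s := J)
      have := (hfx.mul hc).sub (hgx.mul hsh)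
      refine this.congr_deriv ?_
      ring
    have hΛ0 : Λ 0 = 0 := intervalIntegral.integral_same
    have e1 := aux_const_of_derivWithin_zero hJconv
      (hderiv α β hα hβ) (Set.right_mem_uIcc (a := (0:ℝ)) (b := s))
      (Set.left_mem_uIcc (a := (0:ℝ)) (b := s))
    have e2 := aux_const_of_derivWithin_zero hJconv
      (hderiv β α hβ hα) (Set.right_mem_uIcc (a := (0:ℝ)) (b := s))
      (Set.left_mem_uIcc (a := (0:ℝ)) (b := s))
    simp only [hΛ0, mul_zero, Real.cosh_zero, Real.sinh_zero, mul_one, mul_zero,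
      sub_zero] at e1 e2
    exact ⟨e1, e2⟩
  have hid : ∀ x : ℝ, Real.cosh x ^ 2 - Real.sinh x ^ 2 = 1 := Real.cosh_sq_sub_sinh_sq
  constructor
  · intro s hs
    obtain ⟨e1, e2⟩ := key s hs
    linear_combination (-(α s * Real.cosh (2 * Λ s) - β s * Real.sinh (2 * Λ s) + α 0)) * e1
      + (β s * Real.cosh (2 * Λ s) - α s * Real.sinh (2 * Λ s) + β 0) * e2
      - ((β s)^2 - (α s)^2) * hid (2 * Λ s)
  · intro hlt hneg
    set r : ℝ := Real.sqrt ((α 0)^2 - (β 0)^2) with hrdef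
    have hr2 : r ^ 2 = (α 0)^2 - (β 0)^2 := Real.sq_sqrt (by linarith)
    have hrpos : 0 < r := Real.sqrt_pos.mpr (by linarith)
    refine ⟨Real.arsinh (β 0 / r), ?_⟩
    set θ₀ : ℝ := Real.arsinh (β 0 / r) with hθdef
    have hsθ : r * Real.sinh θ₀ = β 0 := by
      rw [hθdef, Real.sinh_arsinh]; field_simp
    have hcθ : r * Real.cosh θ₀ = -α 0 := by
      rw [hθdef, Real.cosh_arsinh]
      have h1 : 1 + (β 0 / r) ^ 2 = (-(α 0) / r) ^ 2 := by
        field_simp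
        nlinarith
      rw [h1, Real.sqrt_sq (div_nonneg (by linarith) hrpos.le), mul_comm,
        div_mul_cancel₀ _ hrpos.ne']
    intro s hs
    obtain ⟨e1, e2⟩ := key s hs
    have hT : (∫ t in (0:ℝ)..s, lam t) = Λ s := rfl
    rw [hT]
    have hcosh : Real.cosh (-2 * Λ s + θ₀)
        = Real.cosh (2 * Λ s) * Real.cosh θ₀ - Real.sinh (2 * Λ s) * Real.sinh θ₀ := by
      rw [show (-2 * Λ s + θ₀) = θ₀ - 2 * Λ s by ring, Real.cosh_sub]
      ring
    have hsinh : Real.sinh (-2 * Λ s + θ₀)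
        = Real.sinh θ₀ * Real.cosh (2 * Λ s) - Real.cosh θ₀ * Real.sinh (2 * Λ s) := by
      rw [show (-2 * Λ s + θ₀) = θ₀ - 2 * Λ s by ring, Real.sinh_sub]
    constructor
    · rw [hcosh]
      linear_combination Real.cosh (2 * Λ s) * e1 + Real.sinh (2 * Λ s) * e2
        - α s * hid (2 * Λ s) + Real.cosh (2 * Λ s) * hcθ - Real.sinh (2 * Λ s) * hsθ
    · rw [hsinh]
      linear_combination Real.cosh (2 * Λ s) * e2 + Real.sinh (2 * Λ s) * e1
        - β s * hid (2 * Λ s) + Real.sinh (2 * Λ s) * hcθ - Real.cosh (2 * Λ s) * hsθ
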